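/- Let b = (b_1, …, b_p) be a composition of n into p non-negative parts. Then the permutation w_b sends b_1^{t−1} + i to b_{t+1}^p + i for all 1 ≤ t ≤ p and 1 ≤ i ≤ b_t (where b_1^0 = 0 and b_{p+1}^p = 0); that is, w_b moves the t-th block of positions of sizes b_1, …, b_p to the positions occupied by the blocks after it. -/

import Mathlib

namespace SymStmt

/-- The simple transposition `s_i = (i, i+1)`, as a permutation of `ℕ`
(only the indices `1 ≤ i < n` are ever used). -/
def s (i : ℕ) : Equiv.Perm ℕ := Equiv.swap i (i + 1)

/-- `w^{⟨k⟩}_{a,b} = (s_{a+b+k-1} s_{a+b+k-2} ⋯ s_{k+1})^b`, where in a word the leftmost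
letter is applied first; thus the underlying cycle is `s_{k+1} ∘ s_{k+2} ∘ ⋯ ∘ s_{a+b+k-1}`,
i.e. the product of the list `[s_{k+1}, s_{k+2}, …, s_{a+b+k-1}]`. -/
def wk (k a b : ℕ) : Equiv.Perm ℕ :=
  (((List.range (a + b - 1)).map fun j => s (k + 1 + j)).prod) ^ b

/-- The length of `w` as an element of `S_n`: the number of inversions
`#{(i,j) : 1 ≤ i < j ≤ n, w i > w j}`. -/
def len (n : ℕ) (w : Equiv.Perm ℕ) : ℕ :=
  ((Finset.Icc 1 n ×ˢ Finset.Icc 1 n).filter fun x => x.1 < x.2 ∧ w x.2 < w x.1).card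

/-- Partial sums `b_i^j = b_i + b_{i+1} + ⋯ + b_j` (equal to `0` if `i > j`). -/
def Bsum (b : ℕ → ℕ) (i j : ℕ) : ℕ := ∑ t ∈ Finset.Icc i j, b t

/-- `w_b` for a composition `b = (b_1, …, b_p)`: the composite obtained by applying
`w^{⟨b_1^{t-1}⟩}_{b_t, b_{t+1}^p}` successively for `t = p-1, p-2, …, 1` (the factor with
`t = p-1` applied first, the factor with `t = 1` applied last). -/
def wcomp (p : ℕ) (b : ℕ → ℕ) : Equiv.Perm ℕ :=
  ((List.range (p - 1)).map fun x => wk (Bsum b 1 x) (b (x + 1)) (Bsum b (x + 2) p)).prod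

end SymStmt

namespace SymProof
open SymStmt
open SymStmt

def c (k m : ℕ) : Equiv.Perm ℕ := ((List.range m).map fun j => s (k + 1 + j)).prod

lemma wk_eq (k a b : ℕ) : wk k a b = (c k (a + b - 1)) ^ b := rfl

lemma c_succ (k m : ℕ) : c k (m + 1) = c k m * s (k + 1 + m) := by
  unfold c
  rw [List.range_succ, List.map_append, List.prod_append, List.map_singleton,
    List.prod_singleton]

lemma s_apply (i x : ℕ) : s i x = if x = i then i + 1 else if x = i + 1 then i else x := by
  unfold s
  rcases eq_or_ne x i with rfl | h1
  · simp
  rcases eq_or_ne x (i + 1) with rfl | h2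
  · simp
  · simp [h1, h2, Equiv.swap_apply_of_ne_of_ne]

lemma c_fix_le (k m x : ℕ) (hx : x ≤ k) : c k m x = x := by
  induction m with
  | zero => simp [c]
  | succ m ih =>
    rw [c_succ, Equiv.Perm.mul_apply, s_apply, if_neg (by omega), if_neg (by omega)]
    exact ih

lemma c_fix_gt (k m x : ℕ) (hx : k + m + 1 < x) : c k m x = x := by
  induction m with
  | zero => simp [c]
  | succ m ih =>
    rw [c_succ, Equiv.Perm.mul_apply, s_apply, if_neg (by omega), if_neg (by omega)]
    exact ih (by omega)

lemma c_top (k m : ℕ) : c k m (k + m + 1) = k + 1 := by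
  induction m with
  | zero => simp [c]
  | succ m ih =>
    rw [c_succ, Equiv.Perm.mul_apply, s_apply, if_neg (by omega),
      if_pos (by omega), show k + 1 + m = k + m + 1 from by omega]
    exact ih

lemma c_shift (k m j : ℕ) (h1 : 1 ≤ j) (h2 : j ≤ m) : c k m (k + j) = k + j + 1 := by
  induction m with
  | zero => omega
  | succ m ih =>
    rw [c_succ, Equiv.Perm.mul_apply, s_apply]
    rcases eq_or_lt_of_le h2 with heq | hlt
    · rw [if_pos (by omega)]
      rw [show k + 1 + m + 1 = k + m + 2 from by omega]
      rw [c_fix_gt k m _ (by omega)]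
      omega
    · rw [if_neg (by omega), if_neg (by omega)]
      exact ih (by omega)

lemma c_pow (k m j e : ℕ) (h1 : 1 ≤ j) (h2 : j + e ≤ m + 1) :
    ((c k m) ^ e) (k + j) = k + j + e := by
  induction e with
  | zero => simp
  | succ e ih =>
    rw [pow_succ', Equiv.Perm.mul_apply, ih (by omega),
      show k + j + e = k + (j + e) from by omega,
      c_shift k m (j + e) (by omega) (by omega)]
    omega

lemma perm_pow_fix (π : Equiv.Perm ℕ) (x n : ℕ) (h : π x = x) : (π ^ n) x = x := by
  induction n with
  | zero => rfl
  | succ n ih => rw [pow_succ', Equiv.Perm.mul_apply, ih, h]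

lemma wk_low (k a bb i : ℕ) (h1 : 1 ≤ i) (h2 : i ≤ a) :
    wk k a bb (k + i) = k + bb + i := by
  rw [wk_eq]
  rw [c_pow k (a + bb - 1) i bb h1 (by omega)]
  omega

lemma wk_high (k a bb i : ℕ) (h1 : 1 ≤ i) (h2 : i ≤ bb) :
    wk k a bb (k + a + i) = k + i := by
  rw [wk_eq]
  set m := a + bb - 1 with hm
  have h3 : ((c k m) ^ (bb - i)) (k + (a + i)) = k + (a + i) + (bb - i) :=
    c_pow k m (a + i) (bb - i) (by omega) (by omega)
  have h4 : c k m (k + m + 1) = k + 1 := c_top k m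
  have h5 : ((c k m) ^ (i - 1)) (k + 1) = k + 1 + (i - 1) :=
    c_pow k m 1 (i - 1) (by omega) (by omega)
  have hsplit : bb = (i - 1) + 1 + (bb - i) := by omega
  calc ((c k m) ^ bb) (k + a + i)
      = ((c k m) ^ (i - 1) * (c k m) ^ 1 * (c k m) ^ (bb - i)) (k + a + i) := by
        rw [← pow_add, ← pow_add, ← hsplit]
    _ = ((c k m) ^ (i - 1)) ((c k m) (((c k m) ^ (bb - i)) (k + a + i))) := by
        simp [Equiv.Perm.mul_apply]
    _ = k + i := by
        rw [show k + a + i = k + (a + i) from by omega, h3,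
          show k + (a + i) + (bb - i) = k + m + 1 from by omega, h4, h5]
        omega

lemma wk_fix_le (k a bb x : ℕ) (hx : x ≤ k) : wk k a bb x = x := by
  rw [wk_eq]; exact perm_pow_fix _ _ _ (c_fix_le k _ x hx)

lemma Bsum_empty (b : ℕ → ℕ) (i j : ℕ) (h : j < i) : Bsum b i j = 0 := by
  unfold Bsum; rw [Finset.Icc_eq_empty (by omega)]; simp

lemma Bsum_succ (b : ℕ → ℕ) (q : ℕ) : Bsum b 1 (q + 1) = Bsum b 1 q + b (q + 1) := by
  unfold Bsum; rw [Finset.sum_Icc_succ_top (by omega)]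

lemma Bsum_bot (b : ℕ → ℕ) (t p : ℕ) (h : t ≤ p) :
    Bsum b t p = b t + Bsum b (t + 1) p := by
  unfold Bsum
  have hs : Finset.Icc t p = insert t (Finset.Icc (t + 1) p) := by
    ext x; simp only [Finset.mem_Icc, Finset.mem_insert]; omega
  rw [hs, Finset.sum_insert (by simp only [Finset.mem_Icc]; omega)]

lemma Bsum_mono (b : ℕ → ℕ) (q t p : ℕ) (h : q ≤ t) : Bsum b t p ≤ Bsum b q p := by
  unfold Bsum
  exact Finset.sum_le_sum_of_subset (Finset.Icc_subset_Icc_left h)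

lemma main (p : ℕ) (b : ℕ → ℕ) : ∀ d q, q + d = p - 1 →
    (∀ x, x ≤ Bsum b 1 q →
      ((List.range' q d).map fun x => wk (Bsum b 1 x) (b (x + 1)) (Bsum b (x + 2) p)).prod x = x) ∧
    (∀ t, q + 1 ≤ t → t ≤ p → ∀ i, 1 ≤ i → i ≤ b t →
      ((List.range' q d).map fun x => wk (Bsum b 1 x) (b (x + 1)) (Bsum b (x + 2) p)).prod
        (Bsum b 1 (t - 1) + i) = Bsum b 1 q + Bsum b (t + 1) p + i) := by
  intro d
  induction d with
  | zero =>
    intro q hq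
    constructor
    · intro x hx; simp
    · intro t ht1 ht2 i hi1 hi2
      simp only [List.range'_zero, List.map_nil, List.prod_nil, Equiv.Perm.one_apply]
      rw [Bsum_empty b (t + 1) p (by omega), show t - 1 = q from by omega]
      omega
  | succ d ih =>
    intro q hq
    obtain ⟨ihfix, ihmain⟩ := ih (q + 1) (by omega)
    have hlist : List.range' q (d + 1) = q :: List.range' (q + 1) d := List.range'_succ (s := q) (n := d) (step := 1)
    constructor
    · intro x hx
      rw [hlist]
      simp only [List.map_cons, List.prod_cons, Equiv.Perm.mul_apply]
      rw [ihfix x (le_trans hx (by rw [Bsum_succ]; omega))]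
      exact wk_fix_le _ _ _ _ hx
    · intro t ht1 ht2 i hi1 hi2
      rw [hlist]
      simp only [List.map_cons, List.prod_cons, Equiv.Perm.mul_apply]
      rcases eq_or_lt_of_le ht1 with heq | hlt
      · have ht' : t - 1 = q := by omega
        rw [ht']
        rw [ihfix (Bsum b 1 q + i) (by rw [Bsum_succ, heq]; omega)]
        rw [wk_low (Bsum b 1 q) (b (q + 1)) (Bsum b (q + 2) p) i hi1 (by rw [heq]; omega)]
        rw [show q + 2 = t + 1 from by omega]
      · rw [ihmain t (by omega) ht2 i hi1 hi2]
        rw [show Bsum b 1 (q + 1) + Bsum b (t + 1) p + i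
            = Bsum b 1 q + b (q + 1) + (Bsum b (t + 1) p + i) from by rw [Bsum_succ]; ring]
        have hle : Bsum b (t + 1) p + i ≤ Bsum b (q + 2) p := by
          have h1 : Bsum b t p = b t + Bsum b (t + 1) p := Bsum_bot b t p ht2
          have h2 : Bsum b t p ≤ Bsum b (q + 2) p := Bsum_mono b (q + 2) t p (by omega)
          omega
        rw [wk_high _ _ _ _ (by omega) hle]
        omega

end SymProof

open SymStmt in
/-- Let `b = (b_1, ..., b_p)` be a composition of `n` into `p` non-negative parts.  Then the
permutation `w_b` sends `b_1^{t-1} + i` to `b_{t+1}^p + i` for all `1 <= t <= p` and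
`1 <= i <= b_t` (where `b_1^0 = 0` and `b_{p+1}^p = 0`). -/
theorem stmt_7 (n p : ℕ) (hn : 1 ≤ n) (hp : 2 ≤ p) (b : ℕ → ℕ)
    (hb : Bsum b 1 p = n) :
    ∀ t : ℕ, 1 ≤ t → t ≤ p → ∀ i : ℕ, 1 ≤ i → i ≤ b t →
      wcomp p b (Bsum b 1 (t - 1) + i) = Bsum b (t + 1) p + i := by
  intro t ht1 ht2 i hi1 hi2
  have key := (SymProof.main p b (p - 1) 0 (by omega)).2 t (by omega) ht2 i hi1 hi2
  unfold wcomp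
  rw [List.range_eq_range']
  rw [key, SymProof.Bsum_empty b 1 0 (by omega)]
  omega
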